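/- Let q_1,...,q_M be Gaussian densities on ℝ^d with means μ_m and diagonal covariances. If KL(q_m || (1/M)∑_{m̃} q_{m̃}) = 0 for all m, then all (μ_m, σ_m) are equal; i.e., in the Gaussian case, vanishing of the MMVM rate term implies all unimodal encoders produce identical distribution parameters. -/

import Mathlib

open MeasureTheory

lemma gauss_form' {μ σ : ℝ} (hσ : 0 < σ) :
    (fun t : ℝ => 1 / (σ * Real.sqrt (2 * Real.pi)) * Real.exp (-(t - μ) ^ 2 / (2 * σ ^ 2)))
      = ProbabilityTheory.gaussianPDFReal μ ⟨σ ^ 2, sq_nonneg σ⟩ := by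
  funext t
  unfold ProbabilityTheory.gaussianPDFReal
  show _ = (Real.sqrt (2 * Real.pi * σ ^ 2))⁻¹ * Real.exp (-(t - μ) ^ 2 / (2 * σ ^ 2))
  have h1 : Real.sqrt (2 * Real.pi * σ ^ 2) = σ * Real.sqrt (2 * Real.pi) := by
    rw [mul_comm (2 * Real.pi) (σ ^ 2), Real.sqrt_mul (sq_nonneg σ), Real.sqrt_sq hσ.le]
  rw [h1, one_div]

lemma gibbs_le' {a b : ℝ} (ha : 0 < a) (hb : 0 < b) : a - b ≤ a * Real.log (a / b) := by
  have ht : 0 < a / b := div_pos ha hb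
  have := Real.one_sub_inv_le_log_of_pos ht
  have hinv : (a / b)⁻¹ = b / a := by field_simp
  rw [hinv] at this
  have := mul_le_mul_of_nonneg_left this ha.le
  calc a - b = a * (1 - b / a) := by field_simp
  _ ≤ a * Real.log (a / b) := this

lemma gibbs_eq' {a b : ℝ} (ha : 0 < a) (hb : 0 < b)
    (h : a * Real.log (a / b) = a - b) : a = b := by
  by_contra hne
  have ht : 0 < a / b := div_pos ha hb
  have hne1 : a / b ≠ 1 := by
    intro h1; exact hne (by field_simp at h1; linarith)
  have hlt : Real.log (b / a) < b / a - 1 :=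
    Real.log_lt_sub_one_of_pos (div_pos hb ha) (fun h1 => hne1 (by field_simp at h1 ⊢; linarith))
  have hlog : Real.log (b / a) = - Real.log (a / b) := by
    rw [← Real.log_inv]; congr 1; field_simp
  rw [hlog] at hlt
  have h2 := (mul_lt_mul_iff_right₀ ha).2 hlt
  have h3 : a * (b / a - 1) = b - a := by field_simp
  nlinarith [h2, h3, h]

lemma param_extract' {p p' s s' A B : ℝ} (hs : 0 < s) (hs' : 0 < s') (hA : 0 < A) (hB : 0 < B)
    (h : ∀ t : ℝ, (1 / (s * Real.sqrt (2 * Real.pi)) * Real.exp (-(t - p) ^ 2 / (2 * s ^ 2))) * A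
      = (1 / (s' * Real.sqrt (2 * Real.pi)) * Real.exp (-(t - p') ^ 2 / (2 * s' ^ 2))) * B) :
    p = p' ∧ s = s' := by
  have hsqrt : 0 < Real.sqrt (2 * Real.pi) := Real.sqrt_pos.2 (by positivity)
  have key : ∀ t₁ t₂ : ℝ,
      -(t₁ - p) ^ 2 / (2 * s ^ 2) + -(t₂ - p') ^ 2 / (2 * s' ^ 2)
        = -(t₁ - p') ^ 2 / (2 * s' ^ 2) + -(t₂ - p) ^ 2 / (2 * s ^ 2) := by
    intro t₁ t₂
    have e1 := h t₁
    have e2 := h t₂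
    rw [← Real.exp_eq_exp, Real.exp_add, Real.exp_add]
    have h13 : (1 / (s * Real.sqrt (2 * Real.pi)) * A * (1 / (s' * Real.sqrt (2 * Real.pi)) * B))
        * (Real.exp (-(t₁ - p) ^ 2 / (2 * s ^ 2)) * Real.exp (-(t₂ - p') ^ 2 / (2 * s' ^ 2)))
      = (1 / (s * Real.sqrt (2 * Real.pi)) * A * (1 / (s' * Real.sqrt (2 * Real.pi)) * B))
        * (Real.exp (-(t₁ - p') ^ 2 / (2 * s' ^ 2)) * Real.exp (-(t₂ - p) ^ 2 / (2 * s ^ 2))) := by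
      linear_combination (1 / (s' * Real.sqrt (2 * Real.pi))
          * Real.exp (-(t₂ - p') ^ 2 / (2 * s' ^ 2)) * B) * e1
        - (1 / (s' * Real.sqrt (2 * Real.pi))
          * Real.exp (-(t₁ - p') ^ 2 / (2 * s' ^ 2)) * B) * e2
    exact mul_left_cancel₀ (ne_of_gt (by positivity)) h13
  have hs0 : s ≠ 0 := ne_of_gt hs
  have hs'0 : s' ≠ 0 := ne_of_gt hs'
  have K1 := key 1 0
  have K2 := key 2 0
  field_simp at K1 K2
  have P1 : s' ^ 2 * (1 - 2 * p) = s ^ 2 * (1 - 2 * p') := by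
    apply mul_left_cancel₀ (show (8 * s ^ 2 * s' ^ 2 : ℝ) ≠ 0 by positivity)
    linear_combination (-8 * s ^ 2 * s' ^ 2) * K1
  have P2 : s' ^ 2 * (4 - 4 * p) = s ^ 2 * (4 - 4 * p') := by
    apply mul_left_cancel₀ (show (8 * s ^ 2 * s' ^ 2 : ℝ) ≠ 0 by positivity)
    linear_combination (-8 * s ^ 2 * s' ^ 2) * K2
  have hs2 : s ^ 2 = s' ^ 2 := by linear_combination P1 - P2 / 2
  have hss : s = s' := by
    have h0 : (s - s') * (s + s') = 0 := by linear_combination hs2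
    rcases mul_eq_zero.1 h0 with h1 | h1
    · linarith
    · linarith
  refine ⟨?_, hss⟩
  have hp : (2 * s ^ 2) * p = (2 * s ^ 2) * p' := by
    linear_combination -(P1 + (1 - 2 * p) * hs2)
  exact mul_left_cancel₀ (show (2 * s ^ 2 : ℝ) ≠ 0 by positivity) hp

/-- Gaussian case: if `q₁,…,q_M` are diagonal Gaussian densities on `ℝ^d` and every
`KL(qₘ ‖ (1/M)∑ₘ̃ qₘ̃)` vanishes, then all means and standard deviations coincide. -/
theorem gaussian_kl_mixture_zero_implies_equal_params
    (d M : ℕ) (μv σv : Fin M → Fin d → ℝ)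
    (hσ : ∀ m i, 0 < σv m i)
    (q : Fin M → (Fin d → ℝ) → ℝ)
    (hq : ∀ m x, q m x = ∏ i, (1 / (σv m i * Real.sqrt (2 * Real.pi)))
        * Real.exp (-(x i - μv m i) ^ 2 / (2 * (σv m i) ^ 2)))
    (r : (Fin d → ℝ) → ℝ)
    (hr : ∀ x, r x = (1 / (M : ℝ)) * ∑ m, q m x)
    (hKL : ∀ m, ∫ x, q m x * Real.log (q m x / r x)
        ∂(Measure.pi fun _ : Fin d => (volume : Measure ℝ)) = 0) :
    ∀ m m', μv m = μv m' ∧ σv m = σv m' := by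
  intro m m'
  haveI : Nonempty (Fin M) := ⟨m⟩
  have hMpos : 0 < M := m.pos
  have hM : 0 < (M : ℝ) := by exact_mod_cast hMpos
  set ν : Measure (Fin d → ℝ) := Measure.pi fun _ : Fin d => (volume : Measure ℝ) with hν
  have hvol : ν = (volume : Measure (Fin d → ℝ)) := by
    rw [hν, MeasureTheory.volume_pi]
  set g : Fin M → Fin d → ℝ → ℝ := fun n i t =>
    1 / (σv n i * Real.sqrt (2 * Real.pi)) * Real.exp (-(t - μv n i) ^ 2 / (2 * (σv n i) ^ 2))
    with hg
  have hq' : ∀ n x, q n x = ∏ i, g n i (x i) := hq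
  have hsqrt : 0 < Real.sqrt (2 * Real.pi) := Real.sqrt_pos.2 (by positivity)
  have hgpos : ∀ n i t, 0 < g n i t := by
    intro n i t
    have := hσ n i
    rw [hg]
    positivity
  have hgcont : ∀ n i, Continuous (g n i) := by
    intro n i
    rw [hg]
    fun_prop
  have hqpos : ∀ n x, 0 < q n x := by
    intro n x
    rw [hq']
    exact Finset.prod_pos fun i _ => hgpos n i _
  have hrpos : ∀ x, 0 < r x := by
    intro x
    rw [hr]
    have h1 : 0 < ∑ n, q n x :=
      Finset.sum_pos (fun n _ => hqpos n x) ⟨m, Finset.mem_univ m⟩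
    positivity
  have hgg : ∀ n i, g n i = ProbabilityTheory.gaussianPDFReal (μv n i)
      ⟨(σv n i) ^ 2, sq_nonneg _⟩ := fun n i => gauss_form' (hσ n i)
  have hqint : ∀ n, Integrable (q n) ν := by
    intro n
    rw [hvol]
    have h1 : Integrable (fun x : Fin d → ℝ => ∏ i, g n i (x i)) :=
      Integrable.fintype_prod (f := fun i => g n i) (fun i => by
        show Integrable (g n i) volume
        rw [hgg]; exact ProbabilityTheory.integrable_gaussianPDFReal _ _)
    have hqe : q n = fun x => ∏ i, g n i (x i) := funext (hq' n)
    rw [hqe]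
    exact h1
  have hqint1 : ∀ n, ∫ x, q n x ∂ν = 1 := by
    intro n
    rw [hvol]
    have hqe : q n = fun x => ∏ i, g n i (x i) := funext (hq' n)
    rw [hqe, MeasureTheory.volume_pi, MeasureTheory.integral_fintype_prod_eq_prod (fun i => g n i)]
    apply Finset.prod_eq_one
    intro i _
    rw [hgg]
    have hv : (0 : NNReal) < ⟨(σv n i) ^ 2, sq_nonneg _⟩ := by
      exact NNReal.coe_pos.1 (pow_pos (hσ n i) 2)
    exact ProbabilityTheory.integral_gaussianPDFReal_eq_one _ hv.ne'
  have hrint : Integrable r ν := by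
    have h1 : Integrable (fun x => (1 / (M : ℝ)) * ∑ n, q n x) ν :=
      (integrable_finset_sum _ fun n _ => hqint n).const_mul _
    have hre : r = fun x => (1 / (M : ℝ)) * ∑ n, q n x := funext hr
    rw [hre]
    exact h1
  have hrint1 : ∫ x, r x ∂ν = 1 := by
    have hre : r = fun x => (1 / (M : ℝ)) * ∑ n, q n x := funext hr
    rw [hre, MeasureTheory.integral_const_mul,
      MeasureTheory.integral_finset_sum _ fun n _ => hqint n]
    simp only [hqint1]
    simp
    field_simp
  have hqcont : ∀ n, Continuous (q n) := by
    intro n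
    have hqe : q n = fun x => ∏ i, g n i (x i) := funext (hq' n)
    rw [hqe]
    exact continuous_finset_prod _ fun i _ => (hgcont n i).comp (continuous_apply i)
  have hrcont : Continuous r := by
    have hre : r = fun x => (1 / (M : ℝ)) * ∑ n, q n x := funext hr
    rw [hre]
    exact continuous_const.mul (continuous_finset_sum _ fun n _ => hqcont n)
  -- main step: every q n equals r
  have hqr : ∀ n, q n = r := by
    intro n
    set f : (Fin d → ℝ) → ℝ :=
      fun x => q n x * Real.log (q n x / r x) - (q n x - r x) with hf
    have hfnn : ∀ x, 0 ≤ f x := fun x => sub_nonneg.2 (gibbs_le' (hqpos n x) (hrpos x))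
    have hfcont : Continuous f := by
      rw [hf]
      apply Continuous.sub
      · exact (hqcont n).mul (Continuous.log ((hqcont n).div hrcont fun x => (hrpos x).ne')
          fun x => (div_pos (hqpos n x) (hrpos x)).ne')
      · exact (hqcont n).sub hrcont
    have hbound : ∀ x, f x ≤ q n x * Real.log M + r x := by
      intro x
      have h1 : q n x / r x ≤ M := by
        rw [div_le_iff₀ (hrpos x)]
        have h2 : (1 / (M : ℝ)) * q n x ≤ r x := by
          rw [hr]
          have := Finset.single_le_sum (f := fun k => q k x)
            (fun k _ => (hqpos k x).le) (Finset.mem_univ n)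
          have hM' : (0 : ℝ) ≤ 1 / (M : ℝ) := by positivity
          exact mul_le_mul_of_nonneg_left this hM'
        have h5 : (M : ℝ) * (1 / (M : ℝ) * q n x) = q n x := by field_simp
        nlinarith [mul_le_mul_of_nonneg_left h2 hM.le, h5]
      have h2 : Real.log (q n x / r x) ≤ Real.log M :=
        Real.log_le_log (div_pos (hqpos n x) (hrpos x)) h1
      have h3 := mul_le_mul_of_nonneg_left h2 (hqpos n x).le
      have h4 := (hqpos n x).le
      rw [hf]
      dsimp only
      nlinarith [h3, h4, (hrpos x).le]
    have hfint : Integrable f ν := by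
      apply Integrable.mono' (g := fun x => q n x * Real.log M + r x)
        (((hqint n).mul_const _).add hrint) hfcont.aestronglyMeasurable
      filter_upwards with x
      rw [Real.norm_eq_abs, abs_of_nonneg (hfnn x)]
      exact hbound x
    have e1 : Integrable (fun x => q n x - r x) ν := (hqint n).sub hrint
    have e2 : Integrable (fun x => q n x * Real.log (q n x / r x)) ν := by
      have he : (fun x => q n x * Real.log (q n x / r x)) = fun x => f x + (q n x - r x) := by
        funext x; rw [hf]; ring
      rw [he]
      exact hfint.add e1
    have hint0 : ∫ x, f x ∂ν = 0 := by
      have hsub : ∫ x, f x ∂ν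
          = (∫ x, q n x * Real.log (q n x / r x) ∂ν) - ∫ x, (q n x - r x) ∂ν := by
        rw [hf]
        exact MeasureTheory.integral_sub e2 e1
      rw [hsub, hKL n, MeasureTheory.integral_sub (hqint n) hrint, hqint1 n, hrint1]
      ring
    have hae : f =ᵐ[ν] 0 :=
      (MeasureTheory.integral_eq_zero_iff_of_nonneg_ae
        (Filter.Eventually.of_forall hfnn) hfint).1 hint0
    haveI : ν.IsOpenPosMeasure := by
      rw [hν]; infer_instance
    have hfeq : f = 0 := Measure.eq_of_ae_eq hae hfcont continuous_const
    funext x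
    have hx : f x = 0 := congrFun hfeq x
    rw [hf] at hx
    exact gibbs_eq' (hqpos n x) (hrpos x) (by dsimp only at hx; linarith)
  have hqq : ∀ x, q m x = q m' x := fun x => by rw [hqr m, hqr m']
  have hparam : ∀ i, μv m i = μv m' i ∧ σv m i = σv m' i := by
    intro i
    have hupd : ∀ (n : Fin M) (t : ℝ), q n (Function.update (fun _ => (0 : ℝ)) i t)
        = g n i t * ∏ j ∈ Finset.univ.erase i, g n j 0 := by
      intro n t
      rw [hq' n, ← Finset.mul_prod_erase _ _ (Finset.mem_univ i), Function.update_self]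
      congr 1
      apply Finset.prod_congr rfl
      intro j hj
      rw [Function.update_of_ne (Finset.ne_of_mem_erase hj)]
    have key : ∀ t : ℝ,
        (1 / (σv m i * Real.sqrt (2 * Real.pi))
            * Real.exp (-(t - μv m i) ^ 2 / (2 * (σv m i) ^ 2)))
          * ∏ j ∈ Finset.univ.erase i, g m j 0
        = (1 / (σv m' i * Real.sqrt (2 * Real.pi))
            * Real.exp (-(t - μv m' i) ^ 2 / (2 * (σv m' i) ^ 2)))
          * ∏ j ∈ Finset.univ.erase i, g m' j 0 := by
      intro t
      have := hqq (Function.update (fun _ => (0 : ℝ)) i t)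
      rwa [hupd m t, hupd m' t] at this
    have hA : 0 < ∏ j ∈ Finset.univ.erase i, g m j 0 :=
      Finset.prod_pos fun j _ => hgpos m j 0
    have hB : 0 < ∏ j ∈ Finset.univ.erase i, g m' j 0 :=
      Finset.prod_pos fun j _ => hgpos m' j 0
    exact param_extract' (hσ m i) (hσ m' i) hA hB key
  exact ⟨funext fun i => (hparam i).1, funext fun i => (hparam i).2⟩
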